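/- arXiv:1606.00426 — 6 statements merged into one kernel-verified Lean document; each statement's English description precedes it below -/
import Mathlib

section
/- Let p, q ∈ ℂ[x,y] with ℂ(p,q,x) = ℂ(x,y) and x algebraic over ℂ(p,q). Then there exist u ∈ ℂ[p,q,x] \ {0} and v ∈ ℂ[p,q] \ {0} such that y = u/v in ℂ(x,y). -/
open MvPolynomial

set_option maxHeartbeats 1000000

noncomputable section

abbrev L := FractionRing (MvPolynomial (Fin 2) ℂ)

-- scratch: main development over a general field setting
section
variable (P Q x : L)

def Wset (P Q x : L) : Set L :=
  {z | ∃ u ∈ Algebra.adjoin ℂ ({P, Q, x} : Set L),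
        ∃ v ∈ Algebra.adjoin ℂ ({P, Q} : Set L), v ≠ 0 ∧ z = u / v}

def Wsub (P Q x : L) : Subring L where
  carrier := Wset P Q x
  one_mem' := ⟨1, one_mem _, 1, one_mem _, one_ne_zero, (div_one 1).symm⟩
  zero_mem' := ⟨0, zero_mem _, 1, one_mem _, one_ne_zero, by simp⟩
  mul_mem' := by
    rintro _ _ ⟨u1, hu1, v1, hv1, hv10, rfl⟩ ⟨u2, hu2, v2, hv2, hv20, rfl⟩
    exact ⟨u1 * u2, mul_mem hu1 hu2, v1 * v2, mul_mem hv1 hv2,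
      mul_ne_zero hv10 hv20, div_mul_div_comm _ _ _ _⟩
  add_mem' := by
    rintro _ _ ⟨u1, hu1, v1, hv1, hv10, rfl⟩ ⟨u2, hu2, v2, hv2, hv20, rfl⟩
    refine ⟨u1 * v2 + v1 * u2, add_mem (mul_mem hu1 ?_) (mul_mem ?_ hu2),
      v1 * v2, mul_mem hv1 hv2, mul_ne_zero hv10 hv20, by rw [div_add_div _ _ hv10 hv20]⟩
    · exact Algebra.adjoin_mono (by intro z hz; simp [Set.mem_insert_iff] at hz ⊢; tauto) hv2
    · exact Algebra.adjoin_mono (by intro z hz; simp [Set.mem_insert_iff] at hz ⊢; tauto) hv1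
  neg_mem' := by
    rintro _ ⟨u, hu, v, hv, hv0, rfl⟩
    exact ⟨-u, neg_mem hu, v, hv, hv0, by ring⟩
end



/-- If `ℂ(p,q,x) = ℂ(x,y)` and `x` is algebraic over `ℂ(p,q)`, then
`y = u/v` for some `u ∈ ℂ[p,q,x] \ {0}` and `v ∈ ℂ[p,q] \ {0}`. -/
theorem y_eq_u_div_v
    (p q : MvPolynomial (Fin 2) ℂ)
    (P Q x y : FractionRing (MvPolynomial (Fin 2) ℂ))
    (hP : P = algebraMap (MvPolynomial (Fin 2) ℂ) _ p)
    (hQ : Q = algebraMap (MvPolynomial (Fin 2) ℂ) _ q)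
    (hx : x = algebraMap (MvPolynomial (Fin 2) ℂ) _ (X 0))
    (hy : y = algebraMap (MvPolynomial (Fin 2) ℂ) _ (X 1))
    (hfrac : IntermediateField.adjoin ℂ {P, Q, x} = ⊤)
    (halg : IsAlgebraic (IntermediateField.adjoin ℂ {P, Q}) x) :
    ∃ u ∈ Algebra.adjoin ℂ ({P, Q, x} : Set (FractionRing (MvPolynomial (Fin 2) ℂ))),
      ∃ v ∈ Algebra.adjoin ℂ ({P, Q} : Set (FractionRing (MvPolynomial (Fin 2) ℂ))),
        u ≠ 0 ∧ v ≠ 0 ∧ y = u / v := by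
  -- y ≠ 0
  have hy0 : y ≠ 0 := by
    rw [hy]
    simp [map_eq_zero_iff _ (IsFractionRing.injective (MvPolynomial (Fin 2) ℂ) L),
      MvPolynomial.X_ne_zero]
  have hsub : ({P, Q} : Set L) ⊆ ({P, Q, x} : Set L) := by
    intro z hz; simp [Set.mem_insert_iff] at hz ⊢; tauto
  have hAR : Algebra.adjoin ℂ ({P, Q} : Set L) ≤ Algebra.adjoin ℂ ({P, Q, x} : Set L) :=
    Algebra.adjoin_mono hsub
  -- every element of the intermediate field ℂ(P,Q) lies in W
  have hKW : ∀ a : L, a ∈ IntermediateField.adjoin ℂ ({P, Q} : Set L) → a ∈ Wsub P Q x := by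
    intro a ha
    have ha' : a ∈ Subfield.closure
        (Set.range (algebraMap ℂ L) ∪ ({P, Q} : Set L)) := ha
    obtain ⟨u, hu, v, hv, huv⟩ := Subfield.mem_closure_iff.mp ha'
    rw [← Algebra.mem_adjoin_iff] at hu hv
    rcases eq_or_ne v 0 with rfl | hv0
    · rw [div_zero] at huv; rw [← huv]; exact zero_mem _
    · exact ⟨u, hAR hu, v, hv, hv0, huv.symm⟩
  -- x is integral over K, hence L is finite over K
  have hxint : IsIntegral (IntermediateField.adjoin ℂ ({P, Q} : Set L)) x := halg.isIntegral
  have htop : IntermediateField.adjoin (IntermediateField.adjoin ℂ ({P, Q} : Set L)) {x} =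
      (⊤ : IntermediateField (IntermediateField.adjoin ℂ ({P, Q} : Set L)) L) := by
    apply IntermediateField.restrictScalars_injective ℂ
    rw [IntermediateField.adjoin_adjoin_left, IntermediateField.restrictScalars_top, ← hfrac]
    congr 1
    ext z; simp [Set.mem_insert_iff]; tauto
  have hfd : FiniteDimensional (IntermediateField.adjoin ℂ ({P, Q} : Set L)) L := by
    have h1 := IntermediateField.adjoin.finiteDimensional hxint
    rw [htop] at h1
    exact (IntermediateField.topEquiv
      (F := IntermediateField.adjoin ℂ ({P, Q} : Set L)) (E := L)).toLinearEquiv.finiteDimensional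
  have hRW : ∀ r : L, r ∈ Algebra.adjoin ℂ ({P, Q, x} : Set L) → r ∈ Wsub P Q x :=
    fun r hr => ⟨r, hr, 1, one_mem _, one_ne_zero, (div_one r).symm⟩
  -- inverses of nonzero elements of R lie in W
  have hinvR : ∀ r : L, r ∈ Algebra.adjoin ℂ ({P, Q, x} : Set L) → r ≠ 0 →
      r⁻¹ ∈ Wsub P Q x := by
    intro r hr hr0
    set K := IntermediateField.adjoin ℂ ({P, Q} : Set L)
    have hrint : IsIntegral K r := IsIntegral.of_finite K r
    set f := minpoly K r with hf
    have hc0 : f.coeff 0 ≠ 0 := minpoly.coeff_zero_ne_zero hrint hr0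
    have heval : (Polynomial.aeval r) f = 0 := minpoly.aeval K r
    rw [Polynomial.aeval_eq_sum_range, Finset.sum_range_succ'] at heval
    set T : L := ∑ i ∈ Finset.range f.natDegree,
      algebraMap K L (f.coeff (i + 1)) * r ^ i with hT
    have hkey : r * T = - algebraMap K L (f.coeff 0) := by
      have h0 := heval
      simp only [Algebra.smul_def, pow_zero, mul_one] at h0
      rw [hT, Finset.mul_sum]
      have hc : ∑ i ∈ Finset.range f.natDegree,
            r * (algebraMap K L (f.coeff (i + 1)) * r ^ i)
          = ∑ i ∈ Finset.range f.natDegree,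
            algebraMap K L (f.coeff (i + 1)) * r ^ (i + 1) :=
        Finset.sum_congr rfl (by intro i _; ring)
      rw [hc]
      exact eq_neg_of_add_eq_zero_left h0
    have hc0' : algebraMap K L (f.coeff 0) ≠ 0 := by
      simpa using (map_ne_zero (algebraMap K L)).mpr hc0
    have hrT : r⁻¹ = T * algebraMap K L (-f.coeff 0)⁻¹ := by
      apply inv_eq_of_mul_eq_one_right
      rw [map_inv₀, map_neg, ← mul_assoc, hkey]
      exact mul_inv_cancel₀ (neg_ne_zero.mpr hc0')
    have hcoe : ∀ a : K, (algebraMap K L a) ∈ Wsub P Q x := fun a =>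
      hKW _ (by rw [IntermediateField.algebraMap_apply]; exact a.2)
    rw [hrT]
    refine mul_mem ?_ (hcoe _)
    rw [hT]
    exact Subring.sum_mem _ fun i _ => mul_mem (hcoe _) (pow_mem (hRW r hr) i)
  -- W is closed under inverses
  have hWinv : ∀ z ∈ Wsub P Q x, z⁻¹ ∈ Wsub P Q x := by
    rintro z ⟨u, hu, v, hv, hv0, rfl⟩
    rcases eq_or_ne u 0 with rfl | hu0
    · rw [zero_div, inv_zero]; exact zero_mem _
    · rw [inv_div, div_eq_mul_inv]
      exact mul_mem (hRW v (hAR hv)) (hinvR u hu hu0)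
  -- package W as an intermediate field
  let F : IntermediateField ℂ L :=
    { Wsub P Q x with
      algebraMap_mem' := fun c => hRW _ (Subalgebra.algebraMap_mem _ c)
      inv_mem' := hWinv }
  have hyW : y ∈ Wsub P Q x := by
    have hle : IntermediateField.adjoin ℂ ({P, Q, x} : Set L) ≤ F :=
      IntermediateField.adjoin_le_iff.mpr fun z hz => hRW z (Algebra.subset_adjoin hz)
    rw [hfrac] at hle
    exact hle (IntermediateField.mem_top)
  obtain ⟨u, hu, v, hv, hv0, hyuv⟩ := hyW
  refine ⟨u, hu, v, hv, ?_, hv0, hyuv⟩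
  rintro rfl
  rw [zero_div] at hyuv
  exact hy0 hyuv
end
end

section
/- Let p, q ∈ ℂ[x,y], let v ∈ ℂ[p,q] \ {0} with v = v₁⋯v_m where each v_j is prime in ℂ[x,y] and lies in ℂ[p,q]. If ℂ* is the unit group of ℂ[x,y], then every unit of ℂ[x,y][1/v] lies in ℂ(p,q) \ {0}. -/
open MvPolynomial

/-! A unit `a` of `ℂ[x,y][1/v]` is `f / vⁿ` with `f · g = v^N` for some polynomial `g`. Since `v` is
a product of primes lying in `ℂ[p,q]`, every divisor of `v^N` is a unit (a constant) times a product
of some of these primes, so `f ∈ ℂ[p,q]`; hence `a = f / vⁿ ∈ ℂ(p,q)`, and `a ≠ 0` as it is a unit. -/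

theorem Submonoid.mem_of_dvd_multiset_prod_of_prime {α : Type*} [CommMonoidWithZero α]
    [IsCancelMulZero α] (S : Submonoid α) (hunit : ∀ u : α, IsUnit u → u ∈ S)
    {M : Multiset α} (hprime : ∀ r ∈ M, Prime r) (hmem : ∀ r ∈ M, r ∈ S) {f : α}
    (hf : f ∣ M.prod) : f ∈ S := by
  induction M using Multiset.induction generalizing f with
  | empty => exact hunit f (isUnit_of_dvd_one (by simpa using hf))
  | cons r M ih =>
    have hr := hprime r (Multiset.mem_cons_self r M)
    have ih' {g : α} : g ∣ M.prod → g ∈ S :=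
      ih (fun x hx => hprime x (Multiset.mem_cons_of_mem hx))
        (fun x hx => hmem x (Multiset.mem_cons_of_mem hx))
    rw [Multiset.prod_cons] at hf
    rcases hr.left_dvd_or_dvd_right_of_dvd_mul hf with ⟨f', rfl⟩ | hfM
    · exact S.mul_mem (hmem r (Multiset.mem_cons_self r M))
        (ih' ((mul_dvd_mul_iff_left hr.ne_zero).mp hf))
    · exact ih' hfM

theorem Submonoid.mem_of_dvd_prod_pow_of_prime {α ι : Type*} [CommMonoidWithZero α]
    [IsCancelMulZero α] [Fintype ι] (S : Submonoid α) (hunit : ∀ u : α, IsUnit u → u ∈ S)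
    {w : ι → α} (hprime : ∀ j, Prime (w j)) (hmem : ∀ j, w j ∈ S) {f : α} {N : ℕ}
    (hf : f ∣ (∏ j, w j) ^ N) : f ∈ S := by
  refine S.mem_of_dvd_multiset_prod_of_prime hunit (M := N • Finset.univ.val.map w)
    (fun r hr => ?_) (fun r hr => ?_) (by rwa [Multiset.prod_nsmul])
  all_goals
    obtain ⟨j, -, rfl⟩ := Multiset.mem_map.mp (Multiset.mem_of_mem_nsmul hr)
  exacts [hprime j, hmem j]

theorem exists_mul_pow_eq_algebraMap_of_mem_adjoin_inv {R A K : Type*} [CommRing R] [CommRing A]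
    [Field K] [Algebra R A] [Algebra A K] [Algebra R K] [IsScalarTower R A K] {v : A}
    (hv : algebraMap A K v ≠ 0) {x : K}
    (hx : x ∈ Algebra.adjoin R (insert (algebraMap A K v)⁻¹ (Set.range (algebraMap A K)))) :
    ∃ (f : A) (n : ℕ), x * algebraMap A K v ^ n = algebraMap A K f := by
  induction hx using Algebra.adjoin_induction with
  | mem y hy =>
    rcases hy with rfl | ⟨f, rfl⟩
    · exact ⟨1, 1, by simp [hv]⟩
    · exact ⟨f, 0, by simp⟩
  | algebraMap c => exact ⟨algebraMap R A c, 0, by simp [IsScalarTower.algebraMap_apply R A K]⟩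
  | add _ _ _ _ ihx ihy =>
    obtain ⟨f, n, hf⟩ := ihx
    obtain ⟨g, k, hg⟩ := ihy
    refine ⟨f * v ^ k + g * v ^ n, n + k, ?_⟩
    simp only [map_add, map_mul, map_pow, ← hf, ← hg]
    ring
  | mul _ _ _ _ ihx ihy =>
    obtain ⟨f, n, hf⟩ := ihx
    obtain ⟨g, k, hg⟩ := ihy
    exact ⟨f * g, n + k, by simp only [map_mul, ← hf, ← hg]; ring⟩

theorem algebraMap_mem_intermediateField_adjoin_of_mem_adjoin {R A K : Type*} [Field R]
    [CommRing A] [Field K] [Algebra R A] [Algebra A K] [Algebra R K] [IsScalarTower R A K]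
    {s : Set A} {r : A} (hr : r ∈ Algebra.adjoin R s) :
    algebraMap A K r ∈ IntermediateField.adjoin R (algebraMap A K '' s) := by
  refine IntermediateField.algebra_adjoin_le_adjoin R _ ?_
  rw [← IsScalarTower.coe_toAlgHom' R A K, Algebra.adjoin_image]
  exact Subalgebra.mem_map.mpr ⟨r, hr, rfl⟩

local notation "𝔸" => MvPolynomial (Fin 2) ℂ
local notation "𝕂" => FractionRing 𝔸

/-- Let `v = v₁⋯v_m ∈ ℂ[p,q] \ {0}` where each `v_j` is prime in `ℂ[x,y]` and lies in
`ℂ[p,q]`. Given that the units of `ℂ[x,y]` are exactly the nonzero constants, every unit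
of `ℂ[x,y][1/v]` (inside `ℂ(x,y)`) lies in `ℂ(p,q) \ {0}`. -/
theorem units_of_localization_in_Cpq
    (p q : MvPolynomial (Fin 2) ℂ)
    (m : ℕ) (vf : Fin m → MvPolynomial (Fin 2) ℂ)
    (hprime : ∀ j, Prime (vf j))
    (hmem : ∀ j, vf j ∈ Algebra.adjoin ℂ ({p, q} : Set (MvPolynomial (Fin 2) ℂ)))
    (v : MvPolynomial (Fin 2) ℂ) (hv : v = ∏ j, vf j) (hv0 : v ≠ 0)
    (hunits : ∀ a : MvPolynomial (Fin 2) ℂ, IsUnit a → ∃ c : ℂ, c ≠ 0 ∧ a = C c)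
    (B : Subalgebra ℂ (FractionRing (MvPolynomial (Fin 2) ℂ)))
    (hB : B = Algebra.adjoin ℂ
      ({algebraMap (MvPolynomial (Fin 2) ℂ) (FractionRing (MvPolynomial (Fin 2) ℂ)) (X 0),
        algebraMap (MvPolynomial (Fin 2) ℂ) (FractionRing (MvPolynomial (Fin 2) ℂ)) (X 1),
        (algebraMap (MvPolynomial (Fin 2) ℂ) (FractionRing (MvPolynomial (Fin 2) ℂ)) v)⁻¹} :
        Set (FractionRing (MvPolynomial (Fin 2) ℂ)))) :
    ∀ a ∈ B, (∃ b ∈ B, a * b = 1) →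
      a ∈ IntermediateField.adjoin ℂ
          {algebraMap (MvPolynomial (Fin 2) ℂ) (FractionRing (MvPolynomial (Fin 2) ℂ)) p,
           algebraMap (MvPolynomial (Fin 2) ℂ) (FractionRing (MvPolynomial (Fin 2) ℂ)) q}
        ∧ a ≠ 0 := by
  set Cpq := Algebra.adjoin ℂ ({p, q} : Set 𝔸)
  rintro a haB ⟨b, hbB, hab⟩
  have hφv : algebraMap 𝔸 𝕂 v ≠ 0 :=
    (map_ne_zero_iff _ (IsFractionRing.injective 𝔸 𝕂)).mpr hv0
  have hB_le :
      B ≤ Algebra.adjoin ℂ (insert (algebraMap 𝔸 𝕂 v)⁻¹ (Set.range (algebraMap 𝔸 𝕂))) :=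
    hB ▸ Algebra.adjoin_mono (by rintro _ (rfl | rfl | rfl) <;> simp)
  obtain ⟨f, n, hf⟩ := exists_mul_pow_eq_algebraMap_of_mem_adjoin_inv hφv (hB_le haB)
  obtain ⟨g, k, hg⟩ := exists_mul_pow_eq_algebraMap_of_mem_adjoin_inv hφv (hB_le hbB)
  have hfg : f * g = v ^ (n + k) := IsFractionRing.injective 𝔸 𝕂 <| by
    simp only [map_mul, map_pow, ← hf, ← hg]
    linear_combination (algebraMap 𝔸 𝕂 v ^ (n + k)) * hab
  have hf_mem : f ∈ Cpq := Cpq.toSubmonoid.mem_of_dvd_prod_pow_of_prime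
    (fun u hu => (hunits u hu).elim fun c hc => hc.2 ▸ Cpq.algebraMap_mem c) hprime hmem
    ⟨g, by rw [← hv, hfg]⟩
  have hv_mem : v ∈ Cpq := hv ▸ prod_mem fun j _ => hmem j
  have hFpq : ∀ r ∈ Cpq,
      algebraMap 𝔸 𝕂 r ∈ IntermediateField.adjoin ℂ {algebraMap 𝔸 𝕂 p, algebraMap 𝔸 𝕂 q} :=
    fun r hr => Set.image_pair (algebraMap 𝔸 𝕂) p q ▸
      algebraMap_mem_intermediateField_adjoin_of_mem_adjoin hr
  have ha : a = algebraMap 𝔸 𝕂 f * ((algebraMap 𝔸 𝕂 v)⁻¹) ^ n := by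
    rw [← hf, inv_pow, mul_inv_cancel_right₀ (pow_ne_zero n hφv)]
  exact ⟨ha ▸ mul_mem (hFpq f hf_mem) (pow_mem (inv_mem (hFpq v hv_mem)) n),
    left_ne_zero_of_mul_eq_one hab⟩
end

section
/- Let A be a UFD and R a subring of A with R* = A* (same unit groups). If every irreducible element of R remains irreducible in A, then R is factorially closed in A: whenever a₁, a₂ ∈ A satisfy a₁a₂ ∈ R \ {0}, then a₁, a₂ ∈ R. Conversely, if R is factorially closed in A then every irreducible of R is irreducible in A. -/
/-- (Jedrzejewicz–Zieliński) Let `A` be a UFD and `R` a subring (itself a UFD) with the same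
unit group as `A`. Then every irreducible element of `R` remains irreducible in `A` if and
only if `R` is factorially closed in `A`. -/
theorem irreducible_stays_irreducible_iff_factorially_closed
    (A : Type*) [CommRing A] [IsDomain A] [UniqueFactorizationMonoid A]
    (R : Subring A) [UniqueFactorizationMonoid R]
    (hunits : ∀ u : Aˣ, (u : A) ∈ R) :
    (∀ r : R, Irreducible r → Irreducible (r : A)) ↔
    (∀ a₁ a₂ : A, a₁ * a₂ ∈ R → a₁ * a₂ ≠ 0 → a₁ ∈ R ∧ a₂ ∈ R) := by
  constructor
  · intro h a₁ a₂ hmem hne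
    have key : ∀ r : R, ∀ b₁ b₂ : A, b₁ * b₂ = (r : A) → b₁ * b₂ ≠ 0 →
        b₁ ∈ R ∧ b₂ ∈ R := by
      intro r
      refine UniqueFactorizationMonoid.induction_on_prime r ?_ ?_ ?_
      · intro b₁ b₂ heq hne
        exact absurd (by simpa using heq) hne
      · intro u hu b₁ b₂ heq hne
        have huA : IsUnit (u : A) := hu.map R.subtype
        have h₁ : IsUnit b₁ := isUnit_of_mul_isUnit_left (heq ▸ huA)
        have h₂ : IsUnit b₂ := isUnit_of_mul_isUnit_right (heq ▸ huA)
        obtain ⟨v₁, rfl⟩ := h₁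
        obtain ⟨v₂, rfl⟩ := h₂
        exact ⟨hunits v₁, hunits v₂⟩
      · intro a p ha hp ih b₁ b₂ heq hne
        have hpA : Prime ((p : R) : A) :=
          (UniqueFactorizationMonoid.irreducible_iff_prime).mp (h p hp.irreducible)
        have hdvd : ((p : R) : A) ∣ b₁ * b₂ := by
          rw [heq]
          push_cast
          exact dvd_mul_right _ _
        have haA : (a : A) ≠ 0 := by
          simpa using Subtype.coe_injective.ne ha
        have heq' : b₁ * b₂ = (p : A) * (a : A) := by
          rw [heq]; push_cast; ring
        rcases hpA.2.2 b₁ b₂ hdvd with ⟨c, rfl⟩ | ⟨c, rfl⟩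
        · have hc : c * b₂ = (a : A) := by
            apply mul_left_cancel₀ hpA.ne_zero
            rw [← mul_assoc]; exact heq'
          have hcne : c * b₂ ≠ 0 := hc ▸ haA
          obtain ⟨hcR, hb₂R⟩ := ih c b₂ hc hcne
          exact ⟨mul_mem p.2 hcR, hb₂R⟩
        · have hc : b₁ * c = (a : A) := by
            apply mul_left_cancel₀ hpA.ne_zero
            rw [show (↑p : A) * (b₁ * c) = b₁ * (↑p * c) by ring]; exact heq'
          have hcne : b₁ * c ≠ 0 := hc ▸ haA
          obtain ⟨hb₁R, hcR⟩ := ih b₁ c hc hcne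
          exact ⟨hb₁R, mul_mem p.2 hcR⟩
    exact key ⟨a₁ * a₂, hmem⟩ a₁ a₂ rfl hne
  · intro h r hr
    constructor
    · intro hu
      obtain ⟨v, hv⟩ := hu
      apply hr.not_isUnit
      refine ⟨⟨r, ⟨((v⁻¹ : Aˣ) : A), hunits v⁻¹⟩, ?_, ?_⟩, rfl⟩
      · ext; simp [← hv]
      · ext; simp [← hv]
    · intro a b hab
      have hne : a * b ≠ 0 := by
        rw [← hab]
        simpa using Subtype.coe_injective.ne hr.ne_zero
      obtain ⟨haR, hbR⟩ := h a b (hab ▸ r.2) hne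
      have : r = (⟨a, haR⟩ : R) * ⟨b, hbR⟩ := by ext; simpa using hab
      rcases hr.isUnit_or_isUnit this with hu | hu
      · exact Or.inl (hu.map R.subtype)
      · exact Or.inr (hu.map R.subtype)
end

section
/- Let p, q ∈ ℂ[x,y] with x algebraic over ℂ(p,q), satisfying ℂ(p,q) ∩ ℂ[x,y] = ℂ[p,q]. If ℂ[p,q] is factorially closed in ℂ[x,y], then x ∈ ℂ[p,q]. -/
open MvPolynomial

noncomputable section


lemma aux_denom {K : Type*} [Field K] [Algebra ℂ K] (P Q a : K)
    (h : a ∈ IntermediateField.adjoin ℂ ({P, Q} : Set K)) :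
    ∃ c d : K, c ∈ Algebra.adjoin ℂ ({P,Q} : Set K) ∧ d ∈ Algebra.adjoin ℂ ({P,Q}:Set K) ∧
      d ≠ 0 ∧ a * d = c := by
  rw [IntermediateField.mem_adjoin_iff] at h
  obtain ⟨r, s, hrs⟩ := h
  have hr : MvPolynomial.aeval (Subtype.val : ({P,Q}:Set K) → K) r ∈ Algebra.adjoin ℂ ({P,Q}:Set K) := by
    have h2 := Algebra.adjoin_range_eq_range_aeval ℂ (Subtype.val : ({P,Q}:Set K) → K)
    rw [Subtype.range_coe] at h2
    rw [h2]; exact ⟨r, rfl⟩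
  have hs : MvPolynomial.aeval (Subtype.val : ({P,Q}:Set K) → K) s ∈ Algebra.adjoin ℂ ({P,Q}:Set K) := by
    have h2 := Algebra.adjoin_range_eq_range_aeval ℂ (Subtype.val : ({P,Q}:Set K) → K)
    rw [Subtype.range_coe] at h2
    rw [h2]; exact ⟨s, rfl⟩
  by_cases hz : MvPolynomial.aeval (Subtype.val : ({P,Q}:Set K) → K) s = 0
  · exact ⟨0, 1, Subalgebra.zero_mem _, Subalgebra.one_mem _, one_ne_zero, by simp [hrs, hz]⟩
  · exact ⟨_, _, hr, hs, hz, by rw [hrs]; field_simp⟩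

set_option maxHeartbeats 1000000 in
set_option synthInstance.maxHeartbeats 400000 in
set_option maxHeartbeats 1000000 in
set_option synthInstance.maxHeartbeats 400000 in
/-- If `x` is algebraic over `ℂ(p,q)`, Wang's intersection `ℂ(p,q) ∩ ℂ[x,y] = ℂ[p,q]` holds,
and `ℂ[p,q]` is factorially closed in `ℂ[x,y]`, then `x ∈ ℂ[p,q]`. -/
theorem x_mem_of_factorially_closed
    (p q : MvPolynomial (Fin 2) ℂ)
    (P Q x : FractionRing (MvPolynomial (Fin 2) ℂ))
    (hP : P = algebraMap (MvPolynomial (Fin 2) ℂ) _ p)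
    (hQ : Q = algebraMap (MvPolynomial (Fin 2) ℂ) _ q)
    (hx : x = algebraMap (MvPolynomial (Fin 2) ℂ) _ (X 0))
    (halg : IsAlgebraic (IntermediateField.adjoin ℂ {P, Q}) x)
    (hWang : (IntermediateField.adjoin ℂ {P, Q} : Set (FractionRing (MvPolynomial (Fin 2) ℂ)))
        ∩ Set.range (algebraMap (MvPolynomial (Fin 2) ℂ) (FractionRing (MvPolynomial (Fin 2) ℂ)))
      = (Algebra.adjoin ℂ ({P, Q} : Set (FractionRing (MvPolynomial (Fin 2) ℂ))) :
          Set (FractionRing (MvPolynomial (Fin 2) ℂ))))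
    (hfc : ∀ a₁ a₂ : MvPolynomial (Fin 2) ℂ,
      a₁ * a₂ ∈ Algebra.adjoin ℂ ({p, q} : Set (MvPolynomial (Fin 2) ℂ)) → a₁ * a₂ ≠ 0 →
      a₁ ∈ Algebra.adjoin ℂ ({p, q} : Set (MvPolynomial (Fin 2) ℂ)) ∧
      a₂ ∈ Algebra.adjoin ℂ ({p, q} : Set (MvPolynomial (Fin 2) ℂ))) :
    X 0 ∈ Algebra.adjoin ℂ ({p, q} : Set (MvPolynomial (Fin 2) ℂ)) := by
  subst hP hQ hx
  set A := Algebra.adjoin ℂ ({p, q} : Set (MvPolynomial (Fin 2) ℂ)) with hA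
  set f : MvPolynomial (Fin 2) ℂ →ₐ[ℂ] FractionRing (MvPolynomial (Fin 2) ℂ) :=
    IsScalarTower.toAlgHom ℂ _ _ with hf
  have hinj : Function.Injective
      (algebraMap (MvPolynomial (Fin 2) ℂ) (FractionRing (MvPolynomial (Fin 2) ℂ))) :=
    IsFractionRing.injective _ _
  have hmap : Algebra.adjoin ℂ
      ({algebraMap (MvPolynomial (Fin 2) ℂ) (FractionRing (MvPolynomial (Fin 2) ℂ)) p,
        algebraMap (MvPolynomial (Fin 2) ℂ) (FractionRing (MvPolynomial (Fin 2) ℂ)) q} :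
        Set (FractionRing (MvPolynomial (Fin 2) ℂ))) = A.map f := by
    rw [hA, AlgHom.map_adjoin, Set.image_insert_eq, Set.image_singleton]
    rfl
  set x : FractionRing (MvPolynomial (Fin 2) ℂ) :=
    algebraMap (MvPolynomial (Fin 2) ℂ) (FractionRing (MvPolynomial (Fin 2) ℂ)) (X 0) with hx
  have hx0 : x ≠ 0 := fun h =>
    X_ne_zero (R := ℂ) 0 (hinj (h.trans (map_zero _).symm))
  set F := IntermediateField.adjoin ℂ
    ({algebraMap (MvPolynomial (Fin 2) ℂ) (FractionRing (MvPolynomial (Fin 2) ℂ)) p,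
      algebraMap (MvPolynomial (Fin 2) ℂ) (FractionRing (MvPolynomial (Fin 2) ℂ)) q} :
      Set (FractionRing (MvPolynomial (Fin 2) ℂ))) with hF
  have hint : IsIntegral F x := halg.isIntegral
  set μ := minpoly F x with hmu
  set n := μ.natDegree with hn
  have hcoeff : ∀ i : ℕ, ∃ c d : MvPolynomial (Fin 2) ℂ, c ∈ A ∧ d ∈ A ∧ d ≠ 0 ∧
      ((μ.coeff i : FractionRing (MvPolynomial (Fin 2) ℂ)) * algebraMap _ _ d
        = algebraMap _ _ c) := by
    intro i
    obtain ⟨C, D, hC, hD, hDne, hCD⟩ := aux_denom _ _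
      (μ.coeff i : FractionRing (MvPolynomial (Fin 2) ℂ)) (SetLike.coe_mem _)
    rw [hmap] at hC hD
    obtain ⟨c, hc, hcC⟩ := hC
    obtain ⟨d, hd, hdD⟩ := hD
    refine ⟨c, d, hc, hd, ?_, ?_⟩
    · intro h; apply hDne; rw [← hdD, h]; exact map_zero _
    · rw [← hcC, ← hdD] at hCD; exact hCD
  choose c d hc hd hdne hcd using hcoeff
  set N : ℕ → MvPolynomial (Fin 2) ℂ :=
    fun i => c i * ∏ j ∈ (Finset.range (n+1)).erase i, d j with hN
  set D : MvPolynomial (Fin 2) ℂ := ∏ j ∈ Finset.range (n+1), d j with hD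
  have hNmem : ∀ i, N i ∈ A := fun i =>
    mul_mem (hc i) (Subalgebra.prod_mem _ fun j _ => hd j)
  have hDval : ∀ i ∈ Finset.range (n+1),
      (μ.coeff i : FractionRing (MvPolynomial (Fin 2) ℂ)) * algebraMap _ _ D
        = algebraMap _ _ (N i) := by
    intro i hi
    rw [hD, ← Finset.mul_prod_erase _ _ hi, hN, map_mul, map_mul, ← mul_assoc, hcd i]
  have hev : (Polynomial.aeval x) μ = 0 := minpoly.aeval F x
  rw [Polynomial.aeval_eq_sum_range] at hev
  have hev2 : (∑ i ∈ Finset.range (n+1),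
      (μ.coeff i : FractionRing (MvPolynomial (Fin 2) ℂ)) * x ^ i) = 0 := by
    rw [← hev]
    refine Finset.sum_congr rfl fun i _ => ?_
    rw [Algebra.smul_def, IntermediateField.algebraMap_apply]
  have key : algebraMap (MvPolynomial (Fin 2) ℂ) (FractionRing (MvPolynomial (Fin 2) ℂ))
      (∑ i ∈ Finset.range (n+1), N i * X 0 ^ i) = 0 := by
    rw [map_sum]
    have h5 : ∀ i ∈ Finset.range (n+1),
        algebraMap (MvPolynomial (Fin 2) ℂ) (FractionRing (MvPolynomial (Fin 2) ℂ))
          (N i * X 0 ^ i)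
        = ((μ.coeff i : FractionRing (MvPolynomial (Fin 2) ℂ)) * x ^ i) * algebraMap _ _ D := by
      intro i hi
      rw [map_mul, ← hDval i hi, map_pow]
      ring
    rw [Finset.sum_congr rfl h5, ← Finset.sum_mul, hev2, zero_mul]
  have hR0 : (∑ i ∈ Finset.range (n+1), N i * X 0 ^ i) = 0 := by
    apply hinj; rw [key, map_zero]
  rw [Finset.sum_range_succ'] at hR0
  set g : MvPolynomial (Fin 2) ℂ := -∑ i ∈ Finset.range n, N (i+1) * X 0 ^ i with hg
  have hprod : X 0 * g = N 0 := by
    have h4 : ∑ k ∈ Finset.range n, N (k+1) * X 0 ^ (k+1)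
        = ∑ i ∈ Finset.range n, X 0 * (N (i+1) * X 0 ^ i) :=
      Finset.sum_congr rfl fun i _ => by ring
    rw [pow_zero, mul_one, h4] at hR0
    rw [hg, mul_neg, Finset.mul_sum]
    linear_combination -hR0
  have hc0 : (μ.coeff 0 : FractionRing (MvPolynomial (Fin 2) ℂ)) ≠ 0 := by
    have h6 := minpoly.coeff_zero_ne_zero hint hx0
    exact fun h => h6 (by exact_mod_cast h)
  have hDne : D ≠ 0 := Finset.prod_ne_zero_iff.mpr fun j _ => hdne j
  have hN0 : N 0 ≠ 0 := by
    intro h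
    have h2 := hDval 0 (Finset.mem_range.mpr (Nat.succ_pos n))
    rw [h, map_zero] at h2
    rcases mul_eq_zero.mp h2 with h3 | h3
    · exact hc0 h3
    · exact hDne (hinj (by rw [h3, map_zero]))
  exact (hfc (X 0) g (hprod ▸ hNmem 0) (hprod ▸ hN0)).1
end
end

section
/- Let f: ℂ[x,y] → ℂ[x,y] be a ℂ-algebra endomorphism with p = f(x), q = f(y), Jac(p,q) ∈ ℂ*, and assume ℂ(p,q) ∩ ℂ[x,y] = ℂ[p,q] and that there exists w ∈ ℂ[x,y] with ℂ[p,q,w] = ℂ[x,y] whenever x ∈ ℂ[p,q] (Formanek's automorphism theorem). If ℂ[p,q] is factorially closed in ℂ[x,y], then f is an automorphism, i.e., ℂ[p,q] = ℂ[x,y]. -/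
open MvPolynomial

/-!
Differentiating a relation `F(p, q) = 0` with the chain rule gives a linear system for
`F_x(p, q)` and `F_y(p, q)` whose determinant is the Jacobian, a nonzero constant; so these
also vanish, and induction on the degree shows `F = 0`. Thus `p, q` are algebraically
independent, hence a transcendence basis of `ℂ[x,y]` (which has transcendence degree 2), and `x`,
`y` are algebraic over `ℂ[p,q]`. Finally, a nonzero root `z` of a nonzero polynomial `H` over a
factorially closed subalgebra `A` lies in `A`: after dividing out powers of `X`, the constant
term `H(0) = -z · (H/X)(z)` is a nonzero element of `A` divisible by `z`.
-/

namespace MvPolynomial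

variable {R σ ι : Type*}

theorem pderiv_aeval [CommSemiring R] [Fintype ι] (g : ι → MvPolynomial σ R) (j : σ)
    (F : MvPolynomial ι R) :
    pderiv j (aeval g F) = ∑ i, aeval g (pderiv i F) * pderiv j (g i) := by
  classical
  induction F using MvPolynomial.induction_on with
  | C a => simp
  | add r s hr hs => simp only [map_add, hr, hs, add_mul, Finset.sum_add_distrib]
  | mul_X r i hr =>
    simp only [map_mul, aeval_X, pderiv_mul, hr, map_add, pderiv_X, add_mul,
      Finset.sum_add_distrib, Finset.sum_mul]
    simp [Pi.single_apply, mul_right_comm]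

theorem totalDegree_pderiv_lt [CommSemiring R] {i : σ} {f : MvPolynomial σ R}
    (h : pderiv i f ≠ 0) : (pderiv i f).totalDegree < f.totalDegree := by
  classical
  obtain ⟨m, hm, hdeg⟩ :=
    Finset.exists_mem_eq_sup _ (support_nonempty.mpr h) fun s => s.sum fun _ e => e
  have hc : coeff (m + Finsupp.single i 1) f ≠ 0 := by
    intro h0; apply mem_support_iff.mp hm; rw [coeff_pderiv, h0, zero_mul]
  have := le_totalDegree (mem_support_iff.mpr hc)
  rw [Finsupp.sum_add_index' (fun _ => rfl) (fun _ _ _ => rfl), Finsupp.sum_single_index rfl]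
    at this
  rw [totalDegree, hdeg]
  omega

theorem eq_C_of_forall_pderiv_eq_zero [CommSemiring R] [NoZeroDivisors R] [CharZero R]
    {f : MvPolynomial σ R} (h : ∀ i, pderiv i f = 0) : f = C (coeff 0 f) := by
  classical
  ext m
  rw [coeff_C]
  split_ifs with hm
  · rw [hm]
  · obtain ⟨i, hi⟩ : ∃ i, m i ≠ 0 := by
      by_contra! hz
      exact hm (Finsupp.ext fun i => (hz i).symm)
    have key := coeff_pderiv (i := i) f (m - Finsupp.single i 1)
    rw [h, coeff_zero,
      tsub_add_cancel_of_le (Finsupp.single_le_iff.mpr (Nat.one_le_iff_ne_zero.mpr hi))] at key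
    exact (mul_eq_zero.mp key.symm).resolve_right (Nat.cast_add_one_ne_zero _)

theorem algebraicIndependent_of_jacobian_eq_C [CommRing R] [IsDomain R] [CharZero R]
    {p q : MvPolynomial (Fin 2) R} {c : R} (hc : c ≠ 0)
    (hJ : pderiv 0 p * pderiv 1 q - pderiv 1 p * pderiv 0 q = C c) :
    AlgebraicIndependent R ![p, q] := by
  rw [algebraicIndependent_iff_injective_aeval, injective_iff_map_eq_zero]
  intro F hF
  induction hd : F.totalDegree using Nat.strong_induction_on generalizing F with
  | _ n ih =>
    have hchain : ∀ j, aeval ![p, q] (pderiv 0 F) * pderiv j p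
        + aeval ![p, q] (pderiv 1 F) * pderiv j q = 0 := by
      intro j
      have := pderiv_aeval ![p, q] j F
      rw [hF, map_zero, Fin.sum_univ_two] at this
      simpa using this.symm
    have hCc : (C c : MvPolynomial (Fin 2) R) ≠ 0 := C_ne_zero.mpr hc
    -- Cramer's rule for the linear system `hchain`, whose determinant is the Jacobian
    have hker : ∀ i, aeval ![p, q] (pderiv i F) = 0 := by
      refine Fin.forall_fin_two.mpr ⟨(mul_eq_zero.mp ?_).resolve_right hCc,
        (mul_eq_zero.mp ?_).resolve_right hCc⟩
      · linear_combination -(aeval ![p, q] (pderiv 0 F)) * hJ + pderiv 1 q * hchain 0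
          - pderiv 0 q * hchain 1
      · linear_combination -(aeval ![p, q] (pderiv 1 F)) * hJ + pderiv 0 p * hchain 1
          - pderiv 1 p * hchain 0
    have hpderiv : ∀ i, pderiv i F = 0 := fun i => by
      by_contra hne
      exact hne (ih _ (hd ▸ totalDegree_pderiv_lt hne) _ (hker i) rfl)
    rw [eq_C_of_forall_pderiv_eq_zero hpderiv] at hF ⊢
    simpa using hF

end MvPolynomial

def Subalgebra.IsFactoriallyClosed {K R : Type*} [CommSemiring K] [Semiring R] [Algebra K R]
    (A : Subalgebra K R) : Prop :=
  ∀ a b : R, a * b ∈ A → a * b ≠ 0 → a ∈ A ∧ b ∈ A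

theorem Subalgebra.IsFactoriallyClosed.mem_of_isAlgebraic {K R : Type*} [CommRing K]
    [CommRing R] [NoZeroDivisors R] [Algebra K R] {A : Subalgebra K R}
    (hA : A.IsFactoriallyClosed) {z : R} (hz : z ≠ 0) (halg : IsAlgebraic A z) : z ∈ A := by
  obtain ⟨G, hG, hGz⟩ := halg
  obtain ⟨H, hGH, hXH⟩ := Polynomial.exists_eq_pow_rootMultiplicity_mul_and_not_dvd G hG 0
  rw [map_zero, sub_zero, Polynomial.X_dvd_iff] at hXH
  have hHz : Polynomial.aeval z H = 0 := by
    rw [hGH, map_mul, map_pow, map_sub, Polynomial.aeval_X, Polynomial.aeval_C, map_zero,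
      sub_zero] at hGz
    exact (mul_eq_zero.mp hGz).resolve_left (pow_ne_zero _ hz)
  have hsplit : z * -Polynomial.aeval z H.divX = algebraMap A R (H.coeff 0) := by
    have := congrArg (Polynomial.aeval z) (Polynomial.X_mul_divX_add H)
    rw [map_add, map_mul, Polynomial.aeval_X, Polynomial.aeval_C, hHz] at this
    linear_combination -this
  refine (hA z (-Polynomial.aeval z H.divX) ?_ ?_).1 <;> rw [hsplit]
  · exact (H.coeff 0).2
  · exact (map_ne_zero_iff _ (FaithfulSMul.algebraMap_injective A R)).mpr hXH

theorem factorially_closed_implies_automorphism_general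
    (p q : MvPolynomial (Fin 2) ℂ)
    (hJac : ∃ c : ℂ, c ≠ 0 ∧
      pderiv 0 p * pderiv 1 q - pderiv 1 p * pderiv 0 q = C c)
    -- ℂ[p,q] is factorially closed in ℂ[x,y]:
    (hfc : ∀ a₁ a₂ : MvPolynomial (Fin 2) ℂ,
      a₁ * a₂ ∈ Algebra.adjoin ℂ ({p, q} : Set (MvPolynomial (Fin 2) ℂ)) → a₁ * a₂ ≠ 0 →
      a₁ ∈ Algebra.adjoin ℂ ({p, q} : Set (MvPolynomial (Fin 2) ℂ)) ∧
      a₂ ∈ Algebra.adjoin ℂ ({p, q} : Set (MvPolynomial (Fin 2) ℂ))) :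
    Algebra.adjoin ℂ ({p, q} : Set (MvPolynomial (Fin 2) ℂ)) = ⊤ := by
  obtain ⟨c, hc, hJ⟩ := hJac
  have hbasis : IsTranscendenceBasis ℂ ![p, q] :=
    (algebraicIndependent_of_jacobian_eq_C hc hJ).isTranscendenceBasis_of_trdeg_le_of_finite
      (by simp)
  have halg := hbasis.isAlgebraic
  rw [Matrix.range_cons_cons_empty] at halg
  rw [eq_top_iff, ← adjoin_range_X, Algebra.adjoin_le_iff]
  rintro _ ⟨i, rfl⟩
  exact Subalgebra.IsFactoriallyClosed.mem_of_isAlgebraic hfc (X_ne_zero i)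
    (halg.isAlgebraic (X i))

/-- If `f` is a `ℂ`-endomorphism of `ℂ[x,y]` with invertible Jacobian and `ℂ[p,q]` is
factorially closed in `ℂ[x,y]`, then (assuming Wang's theorem and Formanek's automorphism
theorem) `f` is an automorphism, i.e. `ℂ[p,q] = ℂ[x,y]`. -/
theorem factorially_closed_implies_automorphism
    (f : MvPolynomial (Fin 2) ℂ →ₐ[ℂ] MvPolynomial (Fin 2) ℂ)
    (p q : MvPolynomial (Fin 2) ℂ) (hp : p = f (X 0)) (hq : q = f (X 1))
    (hJac : ∃ c : ℂ, c ≠ 0 ∧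
      pderiv 0 p * pderiv 1 q - pderiv 1 p * pderiv 0 q = C c)
    (P Q : FractionRing (MvPolynomial (Fin 2) ℂ))
    (hP : P = algebraMap (MvPolynomial (Fin 2) ℂ) _ p)
    (hQ : Q = algebraMap (MvPolynomial (Fin 2) ℂ) _ q)
    -- Wang's intersection theorem:
    (hWang : (IntermediateField.adjoin ℂ {P, Q} : Set (FractionRing (MvPolynomial (Fin 2) ℂ)))
        ∩ Set.range (algebraMap (MvPolynomial (Fin 2) ℂ) (FractionRing (MvPolynomial (Fin 2) ℂ)))
      = (Algebra.adjoin ℂ ({P, Q} : Set (FractionRing (MvPolynomial (Fin 2) ℂ))) :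
          Set (FractionRing (MvPolynomial (Fin 2) ℂ))))
    -- Formanek's automorphism theorem:
    (hFormanek : (∃ w : MvPolynomial (Fin 2) ℂ,
        Algebra.adjoin ℂ ({p, q, w} : Set (MvPolynomial (Fin 2) ℂ)) = ⊤) →
      Algebra.adjoin ℂ ({p, q} : Set (MvPolynomial (Fin 2) ℂ)) = ⊤)
    -- ℂ[p,q] is factorially closed in ℂ[x,y]:
    (hfc : ∀ a₁ a₂ : MvPolynomial (Fin 2) ℂ,
      a₁ * a₂ ∈ Algebra.adjoin ℂ ({p, q} : Set (MvPolynomial (Fin 2) ℂ)) → a₁ * a₂ ≠ 0 →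
      a₁ ∈ Algebra.adjoin ℂ ({p, q} : Set (MvPolynomial (Fin 2) ℂ)) ∧
      a₂ ∈ Algebra.adjoin ℂ ({p, q} : Set (MvPolynomial (Fin 2) ℂ))) :
    Algebra.adjoin ℂ ({p, q} : Set (MvPolynomial (Fin 2) ℂ)) = ⊤ :=
  factorially_closed_implies_automorphism_general p q hJac hfc
end

section
/- Let p, q, r ∈ ℂ[x,y,z] with ℂ(p,q,r,x,y) = ℂ(x,y,z) and x, y algebraic over ℂ(p,q,r). Then there exist u ∈ ℂ[p,q,r,x,y] \ {0} and v ∈ ℂ[p,q,r] \ {0} such that z = u/v in ℂ(x,y,z). -/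
open MvPolynomial

/-!
Put `K = ℂ(p,q,r)`. Since `x` and `y` are algebraic over `K`, the field `K(x,y) = ℂ(x,y,z)` equals
the ring `K[x,y]`, so `z` is a polynomial in `x, y` with coefficients in `K`, i.e. with coefficients
that are quotients of elements of `ℂ[p,q,r]`. The quotients `u / v` with `u ∈ ℂ[p,q,r,x,y]` and
`0 ≠ v ∈ ℂ[p,q,r]` form a `K`-algebra containing `x` and `y`, hence `z`; and `u ≠ 0` as `z ≠ 0`.
-/

namespace IntermediateField

variable {k L : Type*} [Field k] [Field L] [Algebra k L]

/-- A `k(S)`-algebra because every element of `k(S)` is a quotient of elements of `k[S]`. -/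
def quotientsOverAdjoin (S T : Set L) : Subalgebra (adjoin k S) L where
  carrier := {w | ∃ u ∈ Algebra.adjoin k (S ∪ T), ∃ v ∈ Algebra.adjoin k S, v ≠ 0 ∧ w = u / v}
  mul_mem' := by
    rintro _ _ ⟨u₁, hu₁, v₁, hv₁, hv₁0, rfl⟩ ⟨u₂, hu₂, v₂, hv₂, hv₂0, rfl⟩
    exact ⟨u₁ * u₂, mul_mem hu₁ hu₂, v₁ * v₂, mul_mem hv₁ hv₂, mul_ne_zero hv₁0 hv₂0,
      div_mul_div_comm _ _ _ _⟩
  add_mem' := by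
    rintro _ _ ⟨u₁, hu₁, v₁, hv₁, hv₁0, rfl⟩ ⟨u₂, hu₂, v₂, hv₂, hv₂0, rfl⟩
    have hS_le : Algebra.adjoin k S ≤ Algebra.adjoin k (S ∪ T) :=
      Algebra.adjoin_mono Set.subset_union_left
    refine ⟨u₁ * v₂ + v₁ * u₂, ?_, v₁ * v₂, mul_mem hv₁ hv₂, mul_ne_zero hv₁0 hv₂0,
      div_add_div _ _ hv₁0 hv₂0⟩
    exact add_mem (mul_mem hu₁ (hS_le hv₂)) (mul_mem (hS_le hv₁) hu₂)
  algebraMap_mem' := by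
    rintro ⟨c, hc⟩
    obtain ⟨a, ha, b, hb, rfl⟩ := mem_adjoin_iff_div.mp hc
    rcases eq_or_ne b 0 with rfl | hb0
    · exact ⟨0, zero_mem _, 1, one_mem _, one_ne_zero, by simp⟩
    · exact ⟨a, Algebra.adjoin_mono Set.subset_union_left ha, b, hb, hb0, rfl⟩

theorem exists_eq_div_of_mem_adjoin_union {S T : Set L}
    (hT : ∀ t ∈ T, IsAlgebraic (adjoin k S) t) {w : L} (hw : w ∈ adjoin k (S ∪ T)) :
    ∃ u ∈ Algebra.adjoin k (S ∪ T), ∃ v ∈ Algebra.adjoin k S, v ≠ 0 ∧ w = u / v := by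
  have hwT : w ∈ Algebra.adjoin (adjoin k S) T := by
    rw [← adjoin_toSubalgebra_of_isAlgebraic hT]
    rwa [← adjoin_adjoin_left] at hw
  have hT_le : Algebra.adjoin (adjoin k S) T ≤ quotientsOverAdjoin S T :=
    Algebra.adjoin_le fun t ht ↦
      ⟨t, Algebra.subset_adjoin (Set.mem_union_right S ht), 1, one_mem _, one_ne_zero,
        (div_one t).symm⟩
  exact hT_le hwT

end IntermediateField

theorem z_eq_u_div_v_three_vars_general
    (P Q R x y z : FractionRing (MvPolynomial (Fin 3) ℂ))
    (hz : z = algebraMap (MvPolynomial (Fin 3) ℂ) _ (X 2))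
    (hfrac : IntermediateField.adjoin ℂ {P, Q, R, x, y} = ⊤)
    (halgx : IsAlgebraic (IntermediateField.adjoin ℂ {P, Q, R}) x)
    (halgy : IsAlgebraic (IntermediateField.adjoin ℂ {P, Q, R}) y) :
    ∃ u ∈ Algebra.adjoin ℂ ({P, Q, R, x, y} : Set (FractionRing (MvPolynomial (Fin 3) ℂ))),
      ∃ v ∈ Algebra.adjoin ℂ ({P, Q, R} : Set (FractionRing (MvPolynomial (Fin 3) ℂ))),
        u ≠ 0 ∧ v ≠ 0 ∧ z = u / v := by
  have hsets : ({P, Q, R} ∪ {x, y} : Set (FractionRing (MvPolynomial (Fin 3) ℂ))) =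
      {P, Q, R, x, y} := by
    simp only [Set.insert_union, Set.singleton_union]
  have hz_mem : z ∈ IntermediateField.adjoin ℂ ({P, Q, R} ∪ {x, y}) := by
    rw [hsets, hfrac]
    trivial
  have hz0 : z ≠ 0 := by
    rw [hz, ne_eq, IsFractionRing.to_map_eq_zero_iff]
    exact X_ne_zero 2
  obtain ⟨u, hu, v, hv, hv0, rfl⟩ := IntermediateField.exists_eq_div_of_mem_adjoin_union
    (by rintro t (rfl | rfl) <;> assumption) hz_mem
  exact ⟨u, hsets ▸ hu, v, hv, (div_ne_zero_iff.mp hz0).1, hv0, rfl⟩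

/-- Three-variable analogue: if `ℂ(p,q,r,x,y) = ℂ(x,y,z)` and `x, y` are algebraic over
`ℂ(p,q,r)`, then `z = u/v` for some `u ∈ ℂ[p,q,r,x,y] \ {0}` and `v ∈ ℂ[p,q,r] \ {0}`. -/
theorem z_eq_u_div_v_three_vars
    (p q r : MvPolynomial (Fin 3) ℂ)
    (P Q R x y z : FractionRing (MvPolynomial (Fin 3) ℂ))
    (hP : P = algebraMap (MvPolynomial (Fin 3) ℂ) _ p)
    (hQ : Q = algebraMap (MvPolynomial (Fin 3) ℂ) _ q)
    (hR : R = algebraMap (MvPolynomial (Fin 3) ℂ) _ r)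
    (hx : x = algebraMap (MvPolynomial (Fin 3) ℂ) _ (X 0))
    (hy : y = algebraMap (MvPolynomial (Fin 3) ℂ) _ (X 1))
    (hz : z = algebraMap (MvPolynomial (Fin 3) ℂ) _ (X 2))
    (hfrac : IntermediateField.adjoin ℂ {P, Q, R, x, y} = ⊤)
    (halgx : IsAlgebraic (IntermediateField.adjoin ℂ {P, Q, R}) x)
    (halgy : IsAlgebraic (IntermediateField.adjoin ℂ {P, Q, R}) y) :
    ∃ u ∈ Algebra.adjoin ℂ ({P, Q, R, x, y} : Set (FractionRing (MvPolynomial (Fin 3) ℂ))),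
      ∃ v ∈ Algebra.adjoin ℂ ({P, Q, R} : Set (FractionRing (MvPolynomial (Fin 3) ℂ))),
        u ≠ 0 ∧ v ≠ 0 ∧ z = u / v :=
  z_eq_u_div_v_three_vars_general P Q R x y z hz hfrac halgx halgy
end
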